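/- Let μ be a probability measure on ℝ with bounded support, and for y ∈ ℝ let ψ_y be the translation of μ by y. Fix z, c, d ∈ ℝ with c < d, and define the correspondence H(y) = { c·ψ_y((-∞,z)) + d·ψ_y((z,∞)) + ψ_y({z})·(r·c + (1-r)·d) : r ∈ [0,1] }. Then the range of H (the union of H(y) over all y ∈ ℝ) equals the interval [c, d]. -/

import Mathlib

open MeasureTheory

open scoped Topology

private lemma sum_parts (μ : Measure ℝ) [IsProbabilityMeasure μ] (t : ℝ) :
    (μ (Set.Iio t)).toReal + (μ {t}).toReal + (μ (Set.Ioi t)).toReal = 1 := by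
  have h1 : μ (Set.Iio t) + μ {t} + μ (Set.Ioi t) = 1 := by
    rw [← measure_union (by simp [Set.disjoint_left]; exact fun a h => ne_of_lt h)
        (measurableSet_singleton t),
      Set.Iio_union_right,
      ← measure_union (by simp [Set.disjoint_left]) measurableSet_Ioi,
      Set.Iic_union_Ioi, measure_univ]
  have := measure_ne_top μ (Set.Iio t)
  have := measure_ne_top μ ({t} : Set ℝ)
  have := measure_ne_top μ (Set.Ioi t)
  rw [← ENNReal.toReal_add (by finiteness) (by finiteness),
    ← ENNReal.toReal_add (by finiteness) (by finiteness), h1, ENNReal.toReal_one]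

private lemma quantile_exists (μ : Measure ℝ) [IsProbabilityMeasure μ] (N : ℝ)
    (hN : μ (Set.Icc (-N) N) = 1) (q : ℝ) (hq0 : 0 ≤ q) (hq1 : q ≤ 1) :
    ∃ t : ℝ, ∃ r ∈ Set.Icc (0:ℝ) 1,
      (μ (Set.Iio t)).toReal + r * (μ {t}).toReal = q := by
  have hcompl : μ ((Set.Icc (-N) N)ᶜ) = 0 := by
    rw [measure_compl measurableSet_Icc (measure_ne_top _ _), hN, measure_univ, tsub_self]
  rcases eq_or_lt_of_le hq0 with hq | hq
  · refine ⟨-N, 0, ⟨le_refl _, zero_le_one⟩, ?_⟩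
    have h0 : μ (Set.Iio (-N)) = 0 := by
      refine measure_mono_null (fun x hx => ?_) hcompl
      simp only [Set.mem_compl_iff, Set.mem_Icc, Set.mem_Iio] at *
      intro h; linarith [h.1]
    simp [h0, ← hq]
  set F := ProbabilityTheory.cdf μ with hF
  have hFeq : ∀ t, F t = (μ (Set.Iic t)).toReal := fun t =>
    ProbabilityTheory.cdf_eq_real μ t
  set S : Set ℝ := {t : ℝ | q ≤ F t} with hS
  have hNS : N ∈ S := by
    have h1 : μ (Set.Iic N) = 1 := le_antisymm prob_le_one
      (hN ▸ measure_mono (fun x hx => hx.2))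
    simp only [hS, Set.mem_setOf_eq, hFeq, h1, ENNReal.toReal_one]
    exact hq1
  have hSne : S.Nonempty := ⟨N, hNS⟩
  have hbddS : BddBelow S := by
    refine ⟨-N, fun t ht => ?_⟩
    by_contra h
    push_neg at h
    have h0 : μ (Set.Iic t) = 0 := by
      refine measure_mono_null (fun x hx => ?_) hcompl
      simp only [Set.mem_compl_iff, Set.mem_Icc, Set.mem_Iic] at *
      intro h2; linarith [h2.1]
    have : q ≤ F t := ht
    rw [hFeq, h0] at this
    simp at this
    linarith
  set t₀ := sInf S with ht₀
  have hmono : Monotone F := ProbabilityTheory.monotone_cdf μ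
  have hA : q ≤ F t₀ := by
    have htend : Filter.Tendsto F (𝓝[>] t₀) (𝓝 (F t₀)) :=
      ((ProbabilityTheory.cdf μ).right_continuous t₀).tendsto.mono_left
        (nhdsWithin_mono _ Set.Ioi_subset_Ici_self)
    refine ge_of_tendsto htend ?_
    refine eventually_nhdsWithin_of_forall (fun t ht => ?_)
    obtain ⟨s, hsS, hst⟩ := exists_lt_of_csInf_lt hSne ht
    exact le_trans hsS (hmono hst.le)
  have hB : Function.leftLim F t₀ ≤ q := by
    have htend : Filter.Tendsto F (𝓝[<] t₀) (𝓝 (Function.leftLim F t₀)) :=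
      hmono.tendsto_leftLim t₀
    refine le_of_tendsto htend ?_
    refine eventually_nhdsWithin_of_forall (fun t ht => ?_)
    by_contra h
    push_neg at h
    exact absurd (csInf_le hbddS h.le) (not_le.mpr ht)
  set p := (μ (Set.Iio t₀)).toReal with hp
  set m := (μ ({t₀} : Set ℝ)).toReal with hm
  have hm0 : 0 ≤ m := ENNReal.toReal_nonneg
  have hmsing : μ ({t₀} : Set ℝ) = ENNReal.ofReal (F t₀ - Function.leftLim F t₀) := by
    conv_lhs => rw [← ProbabilityTheory.measure_cdf μ]
    exact (ProbabilityTheory.cdf μ).measure_singleton t₀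
  have hmval : m = F t₀ - Function.leftLim F t₀ := by
    rw [hm, hmsing, ENNReal.toReal_ofReal (sub_nonneg.mpr (hmono.leftLim_le le_rfl))]
  have hpm : p + m = F t₀ := by
    have : μ (Set.Iio t₀) + μ {t₀} = μ (Set.Iic t₀) := by
      rw [← measure_union (by simp [Set.disjoint_left]; exact fun a h => ne_of_lt h)
        (measurableSet_singleton t₀), Set.Iio_union_right]
    rw [hp, hm, ← ENNReal.toReal_add (by finiteness) (by finiteness), this, hFeq]
  have hpval : p = Function.leftLim F t₀ := by linarith
  have hpq : p ≤ q := hpval ▸ hB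
  have hqpm : q ≤ p + m := hpm ▸ hA
  rcases eq_or_lt_of_le hm0 with hmz | hmz
  · exact ⟨t₀, 0, ⟨le_refl _, zero_le_one⟩, by rw [← hp, ← hm, ← hmz]; linarith⟩
  · refine ⟨t₀, (q - p) / m, ⟨div_nonneg (by linarith) hm0,
      (div_le_one hmz).mpr (by linarith)⟩, ?_⟩
    rw [← hp, ← hm]
    field_simp
    ring

/-- The range of the correspondence `H` equals `[c, d]`. -/
theorem stmt_0 (μ : Measure ℝ) [IsProbabilityMeasure μ]
    (hbdd : ∃ N : ℝ, μ (Set.Icc (-N) N) = 1) (z c d : ℝ) (hcd : c < d) :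
    (⋃ y : ℝ, {u : ℝ | ∃ r ∈ Set.Icc (0:ℝ) 1,
      u = c * (μ ((· + y) ⁻¹' Set.Iio z)).toReal
        + d * (μ ((· + y) ⁻¹' Set.Ioi z)).toReal
        + (μ ((· + y) ⁻¹' {z})).toReal * (r * c + (1 - r) * d)}) = Set.Icc c d := by
  obtain ⟨N, hN⟩ := hbdd
  have hIio : ∀ y : ℝ, (· + y) ⁻¹' Set.Iio z = Set.Iio (z - y) := by
    intro y; ext x; simp [Set.mem_preimage, lt_sub_iff_add_lt]
  have hIoi : ∀ y : ℝ, (· + y) ⁻¹' Set.Ioi z = Set.Ioi (z - y) := by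
    intro y; ext x; simp [Set.mem_preimage, sub_lt_iff_lt_add]
  have hsing : ∀ y : ℝ, (· + y) ⁻¹' ({z} : Set ℝ) = {z - y} := by
    intro y; ext x; simp only [Set.mem_preimage, Set.mem_singleton_iff]; constructor <;> intro h <;> linarith
  ext u
  simp only [Set.mem_iUnion, Set.mem_setOf_eq, Set.mem_Icc]
  constructor
  · rintro ⟨y, r, ⟨hr0, hr1⟩, hu⟩
    rw [hIio y, hIoi y, hsing y] at hu
    set t := z - y
    have hsum := sum_parts μ t
    set p := (μ (Set.Iio t)).toReal
    set m := (μ ({t} : Set ℝ)).toReal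
    set s := (μ (Set.Ioi t)).toReal
    have hp0 : 0 ≤ p := ENNReal.toReal_nonneg
    have hm0 : 0 ≤ m := ENNReal.toReal_nonneg
    have hs0 : 0 ≤ s := ENNReal.toReal_nonneg
    have key1 : u - c = (d - c) * (s + m * (1 - r)) := by
      linear_combination hu + c * hsum
    have key2 : d - u = (d - c) * (p + m * r) := by
      linear_combination -hu - d * hsum
    have h1 : 0 ≤ (d - c) * (s + m * (1 - r)) :=
      mul_nonneg (by linarith) (by nlinarith)
    have h2 : 0 ≤ (d - c) * (p + m * r) :=
      mul_nonneg (by linarith) (by nlinarith)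
    constructor <;> linarith
  · rintro ⟨huc, hud⟩
    have hdc : (0:ℝ) < d - c := by linarith
    set q := (d - u) / (d - c) with hq
    have hq0 : 0 ≤ q := div_nonneg (by linarith) hdc.le
    have hq1 : q ≤ 1 := (div_le_one hdc).mpr (by linarith)
    obtain ⟨t, r, ⟨hr0, hr1⟩, hqr⟩ := quantile_exists μ N hN q hq0 hq1
    refine ⟨z - t, r, ⟨hr0, hr1⟩, ?_⟩
    rw [hIio, hIoi, hsing]
    have ht : z - (z - t) = t := by ring
    rw [ht]
    have hsum := sum_parts μ t
    set p := (μ (Set.Iio t)).toReal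
    set m := (μ ({t} : Set ℝ)).toReal
    set s := (μ (Set.Ioi t)).toReal
    have hqdef : q * (d - c) = d - u := by
      rw [hq]; field_simp
    linear_combination hqdef + (d - c) * hqr - d * hsum
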